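/- Let A be a commutative ring, f ∈ A[T] monic of degree n ≥ 1, C = A[T]/(f), γ the image of T, and assume that f′(γ) is invertible in C. Then for 0 ≤ i ≤ n−1, the trace tr_{C/A}(γ^i · f′(γ)^{−1}) equals 1 if i = n−1 and 0 otherwise (Euler's formula). -/

import Mathlib

open Polynomial Finset

namespace EulerFormulaAux

variable {A : Type*} [CommRing A] [Nontrivial A] {f : A[X]}

/-- The key recurrence for remainders of powers of `X` mod `f`. -/
theorem key_rec (hf : f.Monic) (hn : 1 ≤ f.natDegree) (j : ℕ) :
    (X ^ (j + 1) : A[X]) %ₘ f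
      = X * (X ^ j %ₘ f) - C ((X ^ j %ₘ f).coeff (f.natDegree - 1)) * f := by
  obtain ⟨d, hd⟩ : ∃ d, f.natDegree = d + 1 := ⟨f.natDegree - 1, (Nat.succ_pred_eq_of_pos hn).symm⟩
  have hfd : f.degree = (f.natDegree : WithBot ℕ) := degree_eq_natDegree hf.ne_zero
  set Rj : A[X] := X ^ j %ₘ f with hRj
  set sj : A := Rj.coeff (f.natDegree - 1) with hsj
  have h1 : Rj + f * (X ^ j /ₘ f) = X ^ j := modByMonic_add_div _ _
  have hdeg : (X * Rj - C sj * f).degree < f.degree := by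
    rw [hfd, degree_lt_iff_coeff_zero]
    intro m hm
    have hRdeg : Rj.degree < (f.natDegree : WithBot ℕ) := hfd ▸ degree_modByMonic_lt _ hf
    rw [coeff_sub, coeff_C_mul]
    rcases eq_or_lt_of_le hm with hm' | hm'
    · -- m = natDegree
      rw [← hm']
      rw [hd, coeff_X_mul]
      have h4 : Rj.coeff d = sj := by rw [hsj, hd]; norm_num
      have h5 : f.coeff (d + 1) = 1 := by rw [← hd]; exact hf.coeff_natDegree
      rw [h4, h5, mul_one, sub_self]
    · -- m > natDegree
      obtain ⟨m', rfl⟩ : ∃ m', m = m' + 1 := ⟨m - 1, by omega⟩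
      rw [coeff_X_mul]
      have h2 : Rj.coeff m' = 0 := by
        apply coeff_eq_zero_of_degree_lt
        exact lt_of_lt_of_le hRdeg (by exact_mod_cast by omega)
      have h3 : f.coeff (m' + 1) = 0 := coeff_eq_zero_of_natDegree_lt (by omega)
      rw [h2, h3, mul_zero, sub_self]
  have h2 : (X * Rj - C sj * f) + f * (X * (X ^ j /ₘ f) + C sj) = X ^ (j + 1) := by
    have : X * (Rj + f * (X ^ j /ₘ f)) = X * X ^ j := by rw [h1]
    linear_combination this
  exact (div_modByMonic_unique _ _ hf ⟨h2, hdeg⟩).2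

theorem pow_mod_self (hf : f.Monic) {j : ℕ} (hj : j < f.natDegree) :
    (X ^ j : A[X]) %ₘ f = X ^ j := by
  rw [modByMonic_eq_self_iff hf, degree_X_pow, degree_eq_natDegree hf.ne_zero]
  exact_mod_cast hj

/-- Remainders of `X^k * g` expanded coefficientwise. -/
theorem mod_mul_coeff (hf : f.Monic) {g : A[X]} {N : ℕ} (hN : g.natDegree < N) (k t : ℕ) :
    ((X ^ k * g) %ₘ f).coeff t
      = ∑ m ∈ range N, g.coeff m * ((X ^ (k + m) %ₘ f).coeff t) := by
  have hg : X ^ k * g = ∑ m ∈ range N, g.coeff m • X ^ (k + m) := by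
    conv_lhs => rw [g.as_sum_range' N hN]
    rw [Finset.mul_sum]
    refine Finset.sum_congr rfl fun m _ => ?_
    rw [← smul_X_eq_monomial, mul_smul_comm, pow_add]
  have := congrArg (fun p => ((Polynomial.modByMonicHom f) p).coeff t) hg
  simpa [Polynomial.modByMonicHom, finset_sum_coeff, coeff_smul, smul_eq_mul,
    add_modByMonic, smul_modByMonic] using this

/-- Top-coefficient recurrence coming from `f * X^k ≡ 0`. -/
theorem top_rel (hf : f.Monic) (k : ℕ) :
    ∑ m ∈ range (f.natDegree + 1),
        f.coeff m * ((X ^ (k + m) %ₘ f).coeff (f.natDegree - 1)) = 0 := by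
  have h0 : ((X ^ k * f) %ₘ f) = 0 := (modByMonic_eq_zero_iff_dvd hf).mpr ⟨X ^ k, mul_comm _ _⟩
  have := mod_mul_coeff hf (g := f) (N := f.natDegree + 1) (Nat.lt_succ_self _) k
    (f.natDegree - 1)
  rw [h0] at this
  simpa using this.symm

/-- The value of the constant coefficient of `X^k %ₘ f`. -/
theorem coeff_zero_eq (hf : f.Monic) (hn : 1 ≤ f.natDegree) (k : ℕ) :
    ((X ^ k : A[X]) %ₘ f).coeff 0
      = ∑ m ∈ range f.natDegree,
          f.coeff (m + 1) * ((X ^ (k + m) %ₘ f).coeff (f.natDegree - 1)) := by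
  obtain ⟨d, hd⟩ : ∃ d, f.natDegree = d + 1 := ⟨f.natDegree - 1, (Nat.succ_pred_eq_of_pos hn).symm⟩
  cases k with
  | zero =>
    have h1 : ((X ^ 0 : A[X]) %ₘ f) = 1 := by
      simpa using pow_mod_self hf (j := 0) hn
    rw [h1]
    have : ∀ m ∈ range f.natDegree,
        f.coeff (m + 1) * ((X ^ (0 + m) %ₘ f).coeff (f.natDegree - 1))
          = if m = f.natDegree - 1 then 1 else 0 := by
      intro m hm
      rw [mem_range] at hm
      rw [zero_add, pow_mod_self hf hm, coeff_X_pow]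
      rcases eq_or_ne m (f.natDegree - 1) with h | h
      · subst h
        simp [show f.natDegree - 1 + 1 = f.natDegree from by omega, hf.coeff_natDegree]
      · rw [if_neg (fun hh => h hh.symm), if_neg h, mul_zero]
    rw [Finset.sum_congr rfl this,
      Finset.sum_ite_eq' (range f.natDegree) (f.natDegree - 1) (fun _ => (1 : A)),
      if_pos (Finset.mem_range.mpr (by omega))]
    exact coeff_one_zero
  | succ k =>
    rw [key_rec hf hn k, coeff_sub, coeff_C_mul]
    have hX0 : (X * (X ^ k %ₘ f)).coeff 0 = 0 := by
      rw [mul_coeff_zero, coeff_X_zero, zero_mul]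
    rw [hX0, zero_sub]
    have htop := top_rel hf k
    rw [Finset.sum_range_succ'] at htop
    have hidx : ∀ m ∈ range f.natDegree,
        f.coeff (m + 1) * ((X ^ (k + 1 + m) %ₘ f).coeff (f.natDegree - 1))
          = f.coeff (m + 1) * ((X ^ (k + (m + 1)) %ₘ f).coeff (f.natDegree - 1)) := by
      intro m _
      rw [show k + 1 + m = k + (m + 1) by omega]
    rw [Finset.sum_congr rfl hidx]
    simp only [add_zero] at htop
    linear_combination -htop

/-- Unrolled recurrence. -/
theorem unroll (hf : f.Monic) (hn : 1 ≤ f.natDegree) (k i : ℕ) :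
    ((X ^ (k + i) : A[X]) %ₘ f).coeff i
      = ((X ^ k : A[X]) %ₘ f).coeff 0
        - ∑ m ∈ range i, f.coeff (m + 1) * ((X ^ (k + m) %ₘ f).coeff (f.natDegree - 1)) := by
  induction i with
  | zero => simp
  | succ i ih =>
    rw [show k + (i + 1) = (k + i) + 1 by omega, key_rec hf hn (k + i),
      coeff_sub, coeff_C_mul, coeff_X_mul, ih, Finset.sum_range_succ]
    ring

/-- The main summation identity. -/
theorem main_sum (hf : f.Monic) (hn : 1 ≤ f.natDegree) (k : ℕ) :
    ∑ i ∈ range f.natDegree, ((X ^ (k + i) : A[X]) %ₘ f).coeff i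
      = ∑ m ∈ range f.natDegree,
          (derivative f).coeff m * ((X ^ (k + m) %ₘ f).coeff (f.natDegree - 1)) := by
  have step1 : ∀ i ∈ range f.natDegree, ((X ^ (k + i) : A[X]) %ₘ f).coeff i
      = ∑ m ∈ Finset.Ico i f.natDegree,
          f.coeff (m + 1) * ((X ^ (k + m) %ₘ f).coeff (f.natDegree - 1)) := by
    intro i hi
    rw [mem_range] at hi
    rw [unroll hf hn k i, coeff_zero_eq hf hn k,
      ← Finset.sum_range_add_sum_Ico
        (fun m => f.coeff (m + 1) * ((X ^ (k + m) %ₘ f).coeff (f.natDegree - 1))) hi.le,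
      add_sub_cancel_left]
  rw [Finset.sum_congr rfl step1, Finset.range_eq_Ico, Finset.sum_Ico_Ico_comm]
  refine Finset.sum_congr rfl fun m hm => ?_
  rw [Finset.sum_const, Nat.Ico_zero_eq_range, Finset.card_range, coeff_derivative,
    nsmul_eq_mul]
  push_cast
  ring

end EulerFormulaAux

open EulerFormulaAux

/-- Trace of multiplication by `mk f p` in terms of `%ₘ`. -/
theorem trace_mul_mk {A : Type*} [CommRing A] [Nontrivial A] {f : A[X]}
    (hf : f.Monic) (hn : 1 ≤ f.natDegree) (p : A[X]) :
    LinearMap.trace A (AdjoinRoot f) (LinearMap.mul A (AdjoinRoot f) (AdjoinRoot.mk f p))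
      = ((p * derivative f) %ₘ f).coeff (f.natDegree - 1) := by
  have key : ∀ k : ℕ,
      LinearMap.trace A (AdjoinRoot f)
          (LinearMap.mul A (AdjoinRoot f) (AdjoinRoot.mk f (X ^ k)))
        = ((X ^ k * derivative f) %ₘ f).coeff (f.natDegree - 1) := by
    intro k
    have hb : LinearMap.trace A (AdjoinRoot f)
        (LinearMap.mul A (AdjoinRoot f) (AdjoinRoot.mk f (X ^ k)))
        = ∑ i : Fin f.natDegree, ((X ^ (k + (i : ℕ)) : A[X]) %ₘ f).coeff (i : ℕ) := by
      rw [LinearMap.trace_eq_matrix_trace A (AdjoinRoot.powerBasis' hf).basis, Matrix.trace]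
      refine Finset.sum_congr rfl fun i _ => ?_
      have hbasis : (AdjoinRoot.powerBasis' hf).basis i = AdjoinRoot.mk f (X ^ (i : ℕ)) := by
        rw [(AdjoinRoot.powerBasis' hf).basis_eq_pow i, AdjoinRoot.powerBasis'_gen, ← AdjoinRoot.mk_X,
          ← map_pow]
      have hrepr : ∀ (x : AdjoinRoot f) (j : Fin (AdjoinRoot.powerBasis' hf).dim),
          (AdjoinRoot.powerBasis' hf).basis.repr x j
            = (AdjoinRoot.modByMonicHom hf x).coeff (j : ℕ) := fun x j => rfl
      rw [Matrix.diag_apply, LinearMap.toMatrix_apply, LinearMap.mul_apply', hbasis, ← map_mul,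
        ← pow_add, hrepr, AdjoinRoot.modByMonicHom_mk]
    rw [hb, Fin.sum_univ_eq_sum_range (fun i => ((X ^ (k + i) : A[X]) %ₘ f).coeff i),
      main_sum hf hn k,
      mod_mul_coeff hf (natDegree_derivative_lt (by omega)) k (f.natDegree - 1)]
  induction p using Polynomial.induction_on' with
  | add p q hp hq =>
    rw [map_add, map_add, map_add, hp, hq, add_mul, add_modByMonic, coeff_add]
  | monomial m a =>
    have h1 : (monomial m a : A[X]) = a • X ^ m := (smul_X_eq_monomial).symm
    rw [h1, ← AdjoinRoot.smul_mk, map_smul, map_smul, key m, smul_mul_assoc, smul_modByMonic,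
      coeff_smul, smul_eq_mul]

theorem trace_pow_mul_inv_derivative
    (A : Type*) [CommRing A] (f : A[X]) (hf : f.Monic) (hn : 1 ≤ f.natDegree)
    (hu : IsUnit ((Polynomial.aeval (AdjoinRoot.root f)) (Polynomial.derivative f)))
    (i : ℕ) (hi : i < f.natDegree) :
    LinearMap.trace A (AdjoinRoot f)
        (LinearMap.mul A (AdjoinRoot f)
          ((AdjoinRoot.root f) ^ i *
            Ring.inverse ((Polynomial.aeval (AdjoinRoot.root f)) (Polynomial.derivative f)))) =
      if i = f.natDegree - 1 then 1 else 0 := by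
  rcases subsingleton_or_nontrivial A with hA | hA
  · exact Subsingleton.elim _ _
  obtain ⟨pu, hpu⟩ := AdjoinRoot.mk_surjective
    (Ring.inverse ((Polynomial.aeval (AdjoinRoot.root f)) (Polynomial.derivative f)))
  have hx : (AdjoinRoot.root f) ^ i *
      Ring.inverse ((Polynomial.aeval (AdjoinRoot.root f)) (Polynomial.derivative f))
      = AdjoinRoot.mk f (X ^ i * pu) := by
    rw [map_mul, map_pow, AdjoinRoot.mk_X, hpu]
  rw [hx, trace_mul_mk hf hn]
  have hdvd : f ∣ (X ^ i * pu * derivative f - X ^ i) := by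
    rw [← AdjoinRoot.mk_eq_zero, map_sub, map_mul, map_mul, map_pow, AdjoinRoot.mk_X, hpu,
      ← AdjoinRoot.aeval_eq, mul_assoc, Ring.inverse_mul_cancel _ hu, mul_one, sub_self]
  rw [modByMonic_eq_of_dvd_sub hf hdvd, pow_mod_self hf hi, coeff_X_pow]
  exact if_congr (eq_comm) rfl rfl
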